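/- arXiv:2005.00207 — 3 statements merged into one kernel-verified Lean document; each statement's English description precedes it below -/
import Mathlib

section
/- Let $n \geq 1$ and let $\{[a_i, b_i]^{T}\}_{i=1}^{n}$ be unit column vectors in $\mathbb{C}^2$. Let $V = \bigotimes_{i=1}^{n} [a_i, b_i]^{T} = [v_1, v_2, \dots, v_{2^n}]^{T}$ be their Kronecker product. Then for every $k$ with $1 \leq k \leq 2^{n-1}$, one has $|v_k| \cdot |v_{2^n - k + 1}| = \prod_{i=1}^{n} |a_i| |b_i|$. -/
open Matrix

noncomputable section

/-- The Kronecker product of the `n` two-dimensional vectors `u 0, …, u (n-1)`,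
with the convention `[a₁,b₁]ᵀ ⊗ [a₂,b₂]ᵀ = [a₁a₂, b₁a₂, a₁b₂, b₁b₂]ᵀ`
(the first factor varies fastest).  With 0-indexing, entry `k` of the product is
`∏ i, cᵢ` where `cᵢ = aᵢ` if bit `i` of `k` is `0` and `cᵢ = bᵢ` otherwise. -/
def kronVec {n : ℕ} (u : Fin n → Fin 2 → ℂ) : Fin (2 ^ n) → ℂ :=
  fun k => ∏ i : Fin n, u i (if Nat.testBit k.val i.val then 1 else 0)

/-- The index `2^n - k + 1` in 1-indexed terms, i.e. `2^n - 1 - k` in 0-indexed terms. -/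
def revIdx {n : ℕ} (k : Fin (2 ^ n)) : Fin (2 ^ n) :=
  ⟨2 ^ n - 1 - (k : ℕ), by have := Nat.two_pow_pos n; omega⟩

theorem stmt7 (n : ℕ) (hn : 1 ≤ n) (u : Fin n → Fin 2 → ℂ)
    (hu : ∀ i, ‖u i 0‖ ^ 2 + ‖u i 1‖ ^ 2 = 1)
    (k : Fin (2 ^ n)) (hk : (k : ℕ) < 2 ^ (n - 1)) :
    ‖kronVec u k‖ * ‖kronVec u (revIdx k)‖
      = ∏ i : Fin n, ‖u i 0‖ * ‖u i 1‖ := by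
  have hrev : ∀ i : Fin n, Nat.testBit (revIdx k).val i.val = !Nat.testBit k.val i.val := by
    intro i
    have h1 : (revIdx k).val = 2 ^ n - ((k : ℕ) + 1) := by
      simp [revIdx]; omega
    rw [h1, Nat.testBit_two_pow_sub_succ k.isLt]
    simp [i.isLt]
  simp only [kronVec, norm_prod, ← Finset.prod_mul_distrib]
  refine Finset.prod_congr rfl fun i _ => ?_
  rw [hrev i]
  cases Nat.testBit k.val i.val <;> simp [mul_comm]
end
end

section
/- Let $n \geq 5$ and let $\{[a_i, b_i]^{T}\}_{i=1}^{n}$ be unit column vectors in $\mathbb{C}^2$, with Kronecker product $W = \bigotimes_{i=1}^{n} [a_i, b_i]^{T} \in \mathbb{C}^{2^n}$. Then $|\langle W | d_n | W \rangle| = |W^{\dagger} d_n W|$ lies in the interval $[2^{-n}(1 - 2n^{-1}),\; 2^{-n}(1 + 2n^{-1})]$. -/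
open Matrix

noncomputable section

/-- The `2^n × 2^n` matrix `d_n` (0-indexed): entries `2⁻ⁿ` on the diagonal, and `2⁻ⁿ` at the
`⌊2^n/n⌋` extreme positions on each end of the anti-diagonal; all other entries are `0`. -/
def dmat (n : ℕ) : Matrix (Fin (2 ^ n)) (Fin (2 ^ n)) ℂ :=
  Matrix.of fun i j =>
    if (j : ℕ) = (i : ℕ) ∨
        ((((i : ℕ) < 2 ^ n / n) ∨ (2 ^ n - 2 ^ n / n ≤ (i : ℕ))) ∧ (j : ℕ) = 2 ^ n - 1 - (i : ℕ))
    then ((2 : ℂ) ^ n)⁻¹ else 0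

/-- Sum over all bit strings of a product factorizes. -/
lemma aux_sum_prod_bits {β : Type*} [CommSemiring β] {n : ℕ} (f : Fin n → Fin 2 → β) :
    ∑ k : Fin (2^n), ∏ i : Fin n, f i (if Nat.testBit k.val i.val then 1 else 0) =
    ∏ i : Fin n, (f i 0 + f i 1) := by
  have hb : ∀ (k : Fin (2^n)) (i : Fin n),
      (if Nat.testBit k.val i.val then 1 else 0 : Fin 2) =
        (finFunctionFinEquiv.symm k : Fin n → Fin 2) i := by
    intro k i
    have hv : ((finFunctionFinEquiv.symm k : Fin n → Fin 2) i : ℕ) = k.val / 2 ^ (i:ℕ) % 2 := by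
      simp [finFunctionFinEquiv]
    apply Fin.ext
    rw [hv, Nat.testBit_eq_decide_div_mod_eq]
    rcases Nat.mod_two_eq_zero_or_one (k.val / 2 ^ (i:ℕ)) with h2 | h2 <;> simp [h2]
  simp_rw [hb]
  rw [Equiv.sum_comp finFunctionFinEquiv.symm (fun g => ∏ i, f i (g i)), ← Fintype.prod_sum]
  congr 1; ext i; rw [Fin.sum_univ_two]

lemma aux_bit_rev {n : ℕ} (k : ℕ) (hk : k < 2^n) (i : Fin n) :
    Nat.testBit (2^n - 1 - k) i.val = ! Nat.testBit k i.val := by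
  have : 2^n - 1 - k = 2^n - (k+1) := by omega
  rw [this, Nat.testBit_two_pow_sub_succ hk, decide_eq_true i.isLt]
  simp

lemma aux_rev_lt {n : ℕ} (k : ℕ) : 2^n - 1 - k < 2^n :=
  lt_of_le_of_lt (by omega) (Nat.sub_lt (Nat.two_pow_pos n) one_pos)

theorem stmt9 (n : ℕ) (hn : 5 ≤ n) (u : Fin n → Fin 2 → ℂ)
    (hu : ∀ i, ‖u i 0‖ ^ 2 + ‖u i 1‖ ^ 2 = 1) :
    ‖star (kronVec u) ⬝ᵥ (dmat n).mulVec (kronVec u)‖ ∈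
      Set.Icc (((2 : ℝ) ^ n)⁻¹ * (1 - 2 * (n : ℝ)⁻¹)) (((2 : ℝ) ^ n)⁻¹ * (1 + 2 * (n : ℝ)⁻¹)) := by
  set N := 2^n with hN
  set r := 2^n / n with hr
  set W := kronVec u with hW
  set c : ℂ := ((2:ℂ)^n)⁻¹ with hc
  set P : Fin N → Prop := fun i => (i:ℕ) < r ∨ N - r ≤ (i:ℕ) with hP
  have instP : DecidablePred P := fun i => instDecidableOr
  set rev : Fin N → Fin N := fun i => ⟨2^n - 1 - (i:ℕ), aux_rev_lt _⟩ with hrev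
  have hNeven : N = 2 * 2^(n-1) := by
    rw [hN, ← pow_succ']
    congr 1; omega
  have hrevne : ∀ i : Fin N, rev i ≠ i := by
    intro i h
    have := congrArg Fin.val h
    simp only [hrev] at this
    have hi := i.isLt
    omega
  -- matrix entry split
  have hentry : ∀ i j : Fin N, dmat n i j =
      (if j = i then c else 0) + (if P i ∧ j = rev i then c else 0) := by
    intro i j
    have hji : ((j:ℕ) = (i:ℕ)) ↔ j = i := by rw [Fin.ext_iff]
    have hjrev : ((j:ℕ) = 2^n - 1 - (i:ℕ)) ↔ j = rev i := by
      rw [Fin.ext_iff]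
    simp only [dmat, Matrix.of_apply]
    by_cases h1 : j = i
    · have h2 : ¬ (P i ∧ j = rev i) := by
        rintro ⟨-, hh⟩
        exact hrevne i (h1 ▸ hh).symm
      rw [if_pos (Or.inl (hji.mpr h1)), if_pos h1, if_neg h2, add_zero]
    · by_cases h2 : P i ∧ j = rev i
      · obtain ⟨hPi, hjr⟩ := h2
        rw [if_pos (Or.inr ⟨hPi, hjrev.mpr hjr⟩), if_neg h1, if_pos ⟨hPi, hjr⟩, zero_add]
      · have hcnd : ¬ ((j:ℕ) = (i:ℕ) ∨
            ((((i : ℕ) < 2 ^ n / n) ∨ (2 ^ n - 2 ^ n / n ≤ (i : ℕ))) ∧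
              (j : ℕ) = 2 ^ n - 1 - (i : ℕ))) := by
          rintro (hh | ⟨ha, hb⟩)
          · exact h1 (hji.mp hh)
          · exact h2 ⟨ha, hjrev.mp hb⟩
        rw [if_neg hcnd, if_neg h1, if_neg h2, add_zero]
  -- mulVec computation
  have hmul : ∀ i : Fin N, (dmat n).mulVec W i =
      c * W i + (if P i then c * W (rev i) else 0) := by
    intro i
    show ∑ j, dmat n i j * W j = _
    simp_rw [hentry i, add_mul, Finset.sum_add_distrib, ite_mul, zero_mul]
    congr 1
    · rw [Finset.sum_ite_eq' Finset.univ i (fun j => c * W j)]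
      simp
    · by_cases hPi : P i
      · simp only [hPi, true_and]
        rw [Finset.sum_ite_eq' Finset.univ (rev i) (fun j => c * W j)]
        simp [hPi]
      · simp [hPi]
  -- conj z * z
  have hconj : ∀ z : ℂ, (starRingEnd ℂ) z * z = ((‖z‖ ^ 2 : ℝ) : ℂ) := by
    intro z
    rw [mul_comm, Complex.mul_conj']; push_cast; ring
  -- norm one
  have hnorm : ∑ k : Fin N, (‖W k‖ ^ 2 : ℝ) = 1 := by
    have : ∀ k : Fin N, (‖W k‖ ^ 2 : ℝ) =
        ∏ i : Fin n, (‖u i (if Nat.testBit k.val i.val then 1 else 0)‖ ^ 2) := by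
      intro k
      rw [hW]; unfold kronVec
      rw [norm_prod, ← Finset.prod_pow]
    simp_rw [this]
    rw [aux_sum_prod_bits (fun i b => ‖u i b‖ ^ 2)]
    simp_rw [hu]
    simp
  -- the cross term
  set T : ℂ := ∑ i : Fin N, (if P i then (starRingEnd ℂ) (W i) * W (rev i) else 0) with hT
  have key : star W ⬝ᵥ (dmat n).mulVec W = c * (1 + T) := by
    show ∑ i, (star W) i * (dmat n).mulVec W i = _
    simp_rw [Pi.star_apply, hmul]
    have : ∀ i : Fin N, star (W i) * (c * W i + (if P i then c * W (rev i) else 0)) =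
        c * ((starRingEnd ℂ) (W i) * W i) +
          c * (if P i then (starRingEnd ℂ) (W i) * W (rev i) else 0) := by
      intro i
      by_cases hPi : P i <;> simp [hPi, Complex.star_def] <;> ring
    simp_rw [this, Finset.sum_add_distrib, ← Finset.mul_sum]
    rw [mul_add, ← hT]
    congr 2
    simp_rw [hconj]
    rw [← Complex.ofReal_sum, hnorm, Complex.ofReal_one]
  -- product of abs values
  set C : ℝ := ∏ i : Fin n, (‖u i 0‖ * ‖u i 1‖) with hC
  have hCnn : 0 ≤ C := Finset.prod_nonneg fun i _ =>
    mul_nonneg (norm_nonneg _) (norm_nonneg _)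
  have habsWW : ∀ k : Fin N, ‖W k‖ * ‖W (rev k)‖ = C := by
    intro k
    rw [hW]; unfold kronVec
    simp only [norm_prod, ← Finset.prod_mul_distrib]
    refine Finset.prod_congr rfl fun i _ => ?_
    show ‖u i _‖ * ‖u i (if Nat.testBit (2^n - 1 - (k:ℕ)) i.val then 1 else 0)‖ = _
    rw [aux_bit_rev (k:ℕ) k.isLt i]
    cases h : Nat.testBit k.val i.val <;> simp [h, mul_comm]
  -- C ≤ 2⁻ⁿ
  have hChalf : C ≤ ((2:ℝ)^n)⁻¹ := by
    calc C ≤ ∏ i : Fin n, (1/2 : ℝ) := by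
          refine Finset.prod_le_prod (fun i _ => mul_nonneg (norm_nonneg _) (norm_nonneg _))
            (fun i _ => ?_)
          nlinarith [hu i, sq_nonneg (‖u i 0‖ - ‖u i 1‖)]
      _ = ((2:ℝ)^n)⁻¹ := by
          rw [Finset.prod_const]
          simp [one_div, inv_pow]
  -- cardinality bounds
  have hrN : r ≤ N := by rw [hr, hN]; exact Nat.div_le_self _ _
  have hcard1 : (Finset.univ.filter fun i : Fin N => (i:ℕ) < r).card ≤ r := by
    have h := Finset.card_le_card_of_injOn (fun i : Fin N => (i:ℕ))
      (s := Finset.univ.filter fun i : Fin N => (i:ℕ) < r) (t := Finset.range r)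
      (fun i hi => by
        simp only [Finset.mem_coe, Finset.mem_filter, Finset.mem_univ, true_and] at hi
        simpa [Finset.mem_range] using hi)
      (fun a _ b _ h => Fin.ext h)
    simpa using h
  have hcard2 : (Finset.univ.filter fun i : Fin N => N - r ≤ (i:ℕ)).card ≤ r := by
    have h := Finset.card_le_card_of_injOn (fun i : Fin N => (i:ℕ))
      (s := Finset.univ.filter fun i : Fin N => N - r ≤ (i:ℕ)) (t := Finset.Ico (N - r) N)
      (fun i hi => by
        simp only [Finset.mem_coe, Finset.mem_filter, Finset.mem_univ, true_and] at hi
        simp only [Finset.mem_coe, Finset.mem_Ico]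
        exact ⟨hi, i.isLt⟩)
      (fun a _ b _ h => Fin.ext h)
    rw [Nat.card_Ico] at h
    omega
  -- bound on |T|
  have hTbound : ‖T‖ ≤ 2 * (n:ℝ)⁻¹ := by
    have h1 : ‖T‖ ≤ ∑ i : Fin N, (if P i then C else 0) := by
      refine le_trans (norm_sum_le _ _) (Finset.sum_le_sum fun i _ => ?_)
      by_cases hPi : P i
      · rw [if_pos hPi, if_pos hPi, norm_mul, Complex.norm_conj, habsWW]
      · rw [if_neg hPi, if_neg hPi, norm_zero]
    have h2 : ∑ i : Fin N, (if P i then C else 0) ≤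
        ∑ i : Fin N, ((if (i:ℕ) < r then C else 0) + (if N - r ≤ (i:ℕ) then C else 0)) := by
      refine Finset.sum_le_sum fun i _ => ?_
      have hi1 : (0:ℝ) ≤ (if (i:ℕ) < r then C else 0) := by split <;> simp [hCnn]
      have hi2 : (0:ℝ) ≤ (if N - r ≤ (i:ℕ) then C else 0) := by split <;> simp [hCnn]
      by_cases hPi : P i
      · rw [if_pos hPi]
        rcases hPi with h | h
        · rw [if_pos h]; linarith
        · rw [if_pos h]; linarith
      · rw [if_neg hPi]
        linarith
    have h3 : ∑ i : Fin N, ((if (i:ℕ) < r then C else 0) + (if N - r ≤ (i:ℕ) then C else 0)) ≤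
        2 * (r:ℝ) * C := by
      rw [Finset.sum_add_distrib, ← Finset.sum_filter, ← Finset.sum_filter,
        Finset.sum_const, Finset.sum_const, nsmul_eq_mul, nsmul_eq_mul]
      have := hcard1; have := hcard2
      nlinarith [hCnn, (Nat.cast_le (α := ℝ)).2 hcard1, (Nat.cast_le (α := ℝ)).2 hcard2]
    have hrle : (r:ℝ) * ((2:ℝ)^n)⁻¹ ≤ (n:ℝ)⁻¹ := by
      have hnr : (n:ℝ) * (r:ℝ) ≤ (2:ℝ)^n := by
        have h0 : n * r ≤ 2^n := Nat.mul_div_le (2^n) n |>.trans_eq rfl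
        calc (n:ℝ) * (r:ℝ) = ((n * r : ℕ) : ℝ) := by push_cast; ring
          _ ≤ ((2^n : ℕ) : ℝ) := Nat.cast_le.2 h0
          _ = (2:ℝ)^n := by push_cast; ring
      have hnpos : (0:ℝ) < (n:ℝ) := by
        have : 0 < n := by omega
        exact_mod_cast this
      have h2pos : (0:ℝ) < (2:ℝ)^n := by positivity
      have hrd : (r:ℝ) ≤ (2:ℝ)^n / (n:ℝ) := by
        rw [le_div_iff₀ hnpos]; nlinarith
      calc (r:ℝ) * ((2:ℝ)^n)⁻¹ ≤ ((2:ℝ)^n / (n:ℝ)) * ((2:ℝ)^n)⁻¹ := by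
            have := inv_nonneg.2 h2pos.le
            nlinarith
        _ = (n:ℝ)⁻¹ := by
            field_simp
    have h4 : 2 * (r:ℝ) * C ≤ 2 * (n:ℝ)⁻¹ := by
      calc 2 * (r:ℝ) * C ≤ 2 * (r:ℝ) * ((2:ℝ)^n)⁻¹ := by
            have : (0:ℝ) ≤ (r:ℝ) := by positivity
            nlinarith
        _ ≤ 2 * (n:ℝ)⁻¹ := by nlinarith
    linarith
  -- finish
  rw [key, norm_mul]
  have hcabs : ‖c‖ = ((2:ℝ)^n)⁻¹ := by
    rw [hc, norm_inv, norm_pow, Complex.norm_two]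
  rw [hcabs]
  have habs1T_ub : ‖1 + T‖ ≤ 1 + 2 * (n:ℝ)⁻¹ := by
    calc ‖1 + T‖ ≤ ‖(1:ℂ)‖ + ‖T‖ := norm_add_le _ _
      _ = 1 + ‖T‖ := by rw [norm_one]
      _ ≤ 1 + 2 * (n:ℝ)⁻¹ := by linarith
  have habs1T_lb : 1 - 2 * (n:ℝ)⁻¹ ≤ ‖1 + T‖ := by
    have h := norm_add_le (1 + T) (-T)
    have he : (1 + T + -T : ℂ) = 1 := by ring
    rw [he, norm_one, norm_neg] at h
    linarith [hTbound, h]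
  have hinvnn : (0:ℝ) ≤ ((2:ℝ)^n)⁻¹ := by positivity
  constructor
  · exact mul_le_mul_of_nonneg_left habs1T_lb hinvnn
  · exact mul_le_mul_of_nonneg_left habs1T_ub hinvnn
end
end

section
/- Let $(r_i)_{i \geq 5}$ and $(\delta_i)_{i \geq 5}$ be sequences of real numbers such that for every $i \geq 5$: $r_i \in [2^{-i}(1 - 2 i^{-1}),\; 2^{-i}(1 + 2 i^{-1})]$ and $|\delta_i| \leq 2^{-i+1} i^{-1}$. Suppose there exist $\alpha > 0$ and $\epsilon > 0$ such that for all $n \geq 5$: $\prod_{i=5}^{n} r_i \geq \alpha \prod_{i=5}^{n} (r_i + \delta_i)$ and $\prod_{i=5}^{n} r_i \geq \epsilon \prod_{i=5}^{n} (r_i - \delta_i)$. Then there exists $G > 0$ such that for all $n \geq 5$, $\prod_{i=5}^{n} (r_i + \delta_i) \geq G \prod_{i=5}^{n} r_i$. -/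
open Finset

set_option maxHeartbeats 2000000 in
theorem stmt13 (r δ : ℕ → ℝ)
    (hr : ∀ i : ℕ, 5 ≤ i →
      r i ∈ Set.Icc (((2 : ℝ) ^ i)⁻¹ * (1 - 2 * (i : ℝ)⁻¹)) (((2 : ℝ) ^ i)⁻¹ * (1 + 2 * (i : ℝ)⁻¹)))
    (hδ : ∀ i : ℕ, 5 ≤ i → |δ i| ≤ 2 * ((2 : ℝ) ^ i)⁻¹ * (i : ℝ)⁻¹)
    (α : ℝ) (hα : 0 < α)
    (hprod₁ : ∀ n, 5 ≤ n →
      α * ∏ i ∈ Finset.Icc 5 n, (r i + δ i) ≤ ∏ i ∈ Finset.Icc 5 n, r i)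
    (ε : ℝ) (hε : 0 < ε)
    (hprod₂ : ∀ n, 5 ≤ n →
      ε * ∏ i ∈ Finset.Icc 5 n, (r i - δ i) ≤ ∏ i ∈ Finset.Icc 5 n, r i) :
    ∃ G : ℝ, 0 < G ∧ ∀ n, 5 ≤ n →
      G * ∏ i ∈ Finset.Icc 5 n, r i ≤ ∏ i ∈ Finset.Icc 5 n, (r i + δ i) := by
  have key : ∀ i : ℕ, 5 ≤ i → 0 < r i ∧ 0 < r i + δ i ∧ 0 < r i - δ i ∧
      (1 - 4/((i:ℝ)-2)^2) * (r i)^2 ≤ (r i + δ i) * (r i - δ i) ∧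
      0 ≤ 1 - 4/((i:ℝ)-2)^2 := by
    intro i hi
    obtain ⟨h1, h2⟩ := hr i hi
    have hd := hδ i hi
    obtain ⟨hd1, hd2⟩ := abs_le.mp hd
    have hi5 : (5:ℝ) ≤ i := by exact_mod_cast hi
    have hipos : (0:ℝ) < i := by linarith
    have h2pos : (0:ℝ) < ((2:ℝ)^i)⁻¹ := by positivity
    have hinv : (i:ℝ)⁻¹ ≤ 5⁻¹ := by
      rw [inv_le_inv₀ hipos (by norm_num)]; exact hi5
    have hinvpos : (0:ℝ) < (i:ℝ)⁻¹ := by positivity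
    have hii : (i:ℝ) * (i:ℝ)⁻¹ = 1 := mul_inv_cancel₀ (ne_of_gt hipos)
    have hrpos : 0 < r i := by nlinarith
    have hplus : 0 < r i + δ i := by nlinarith
    have hminus : 0 < r i - δ i := by nlinarith
    have hs : (3:ℝ) ≤ (i:ℝ) - 2 := by linarith
    have hspos : (0:ℝ) < (i:ℝ) - 2 := by linarith
    -- |δ| * (i-2) ≤ 2 * r i
    have hkey : |δ i| * ((i:ℝ) - 2) ≤ 2 * r i := by
      have h3 : ((i:ℝ)^i)⁻¹ = ((i:ℝ)^i)⁻¹ := rfl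
      have : 2 * ((2:ℝ)^i)⁻¹ * (i:ℝ)⁻¹ * ((i:ℝ) - 2) ≤ 2 * r i := by
        have hh : ((2:ℝ)^i)⁻¹ * (1 - 2*(i:ℝ)⁻¹) = ((2:ℝ)^i)⁻¹ * (i:ℝ)⁻¹ * ((i:ℝ) - 2) := by
          field_simp
        nlinarith [mul_pos h2pos hinvpos]
      nlinarith [abs_nonneg (δ i)]
    have hsq : (δ i)^2 * ((i:ℝ) - 2)^2 ≤ 4 * (r i)^2 := by
      have h := mul_self_le_mul_self (mul_nonneg (abs_nonneg (δ i)) hspos.le) hkey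
      have e1 : (|δ i| * ((i:ℝ)-2)) * (|δ i| * ((i:ℝ)-2)) = (δ i)^2 * ((i:ℝ)-2)^2 := by
        rw [mul_mul_mul_comm, ← sq, ← sq, sq_abs]
      have e2 : (2 * r i) * (2 * r i) = 4 * (r i)^2 := by ring
      rw [e1, e2] at h; exact h
    have hc : (0:ℝ) ≤ 1 - 4/((i:ℝ)-2)^2 := by
      rw [sub_nonneg, div_le_one (by positivity)]; nlinarith
    refine ⟨hrpos, hplus, hminus, ?_, hc⟩
    have hdiv : (δ i)^2 ≤ 4 * (r i)^2 / ((i:ℝ)-2)^2 := by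
      rw [le_div_iff₀ (by positivity)]; nlinarith
    have heq : (1 - 4/((i:ℝ)-2)^2) * (r i)^2 = (r i)^2 - 4 * (r i)^2 / ((i:ℝ)-2)^2 := by
      field_simp
    have hexp : (r i + δ i) * (r i - δ i) = (r i)^2 - (δ i)^2 := by ring
    rw [heq, hexp]
    linarith
  have prodc : ∀ n : ℕ, 5 ≤ n → ∏ i ∈ Icc 5 n, (1 - 4/((i:ℝ)-2)^2)
      = ((n:ℝ)-1)*(n:ℝ)/(6*((n:ℝ)-3)*((n:ℝ)-2)) := by
    intro n hn
    induction n, hn using Nat.le_induction with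
    | base => norm_num
    | succ n hn ih =>
      rw [Finset.prod_Icc_succ_top (by omega), ih]
      have hn5 : (5:ℝ) ≤ n := by exact_mod_cast hn
      have h1 : ((n:ℝ)-3) ≠ 0 := by linarith
      have h2 : ((n:ℝ)-2) ≠ 0 := by linarith
      have h3 : ((n:ℝ)-1) ≠ 0 := by linarith
      push_cast
      have h4 : ((n:ℝ)+1-2) ≠ 0 := by linarith
      have h5 : ((n:ℝ)+1-3) ≠ 0 := by linarith
      have e0 : ((n:ℝ)+1-2) = (n:ℝ)-1 := by ring
      have e1 : (1 - 4/(((n:ℝ)-1)^2)) = (((n:ℝ)-3)*((n:ℝ)+1))/(((n:ℝ)-1)^2) := by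
        rw [eq_div_iff (pow_ne_zero 2 h3), sub_mul, one_mul,
          div_mul_cancel₀ _ (pow_ne_zero 2 h3)]
        ring
      have hA : (6*((n:ℝ)-3)*((n:ℝ)-2)*(((n:ℝ)-1)^2)) ≠ 0 :=
        mul_ne_zero (mul_ne_zero (mul_ne_zero (by norm_num) h1) h2) (pow_ne_zero 2 h3)
      have hB : (6*((n:ℝ)+1-3)*((n:ℝ)-1)) ≠ 0 :=
        mul_ne_zero (mul_ne_zero (by norm_num) h5) h3
      rw [e0, e1, div_mul_div_comm, div_eq_div_iff hA hB]
      ring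

  refine ⟨ε/6, by positivity, ?_⟩
  intro n hn
  have hmem : ∀ i ∈ Icc 5 n, 5 ≤ i := fun i hi => (Finset.mem_Icc.mp hi).1
  have Ppos : 0 < ∏ i ∈ Icc 5 n, r i :=
    Finset.prod_pos fun i hi => (key i (hmem i hi)).1
  have Qpos : 0 < ∏ i ∈ Icc 5 n, (r i + δ i) :=
    Finset.prod_pos fun i hi => (key i (hmem i hi)).2.1
  have Rpos : 0 < ∏ i ∈ Icc 5 n, (r i - δ i) :=
    Finset.prod_pos fun i hi => (key i (hmem i hi)).2.2.1
  have hclower : (1:ℝ)/6 ≤ ∏ i ∈ Icc 5 n, (1 - 4/((i:ℝ)-2)^2) := by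
    rw [prodc n hn]
    have hn5 : (5:ℝ) ≤ n := by exact_mod_cast hn
    rw [div_le_div_iff₀ (by norm_num) (by nlinarith)]
    nlinarith
  have hprodle : (∏ i ∈ Icc 5 n, (1 - 4/((i:ℝ)-2)^2)) * (∏ i ∈ Icc 5 n, r i)^2
      ≤ (∏ i ∈ Icc 5 n, (r i + δ i)) * (∏ i ∈ Icc 5 n, (r i - δ i)) := by
    rw [← Finset.prod_pow, ← Finset.prod_mul_distrib, ← Finset.prod_mul_distrib]
    refine Finset.prod_le_prod (fun i hi => ?_) (fun i hi => ?_)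
    · exact mul_nonneg (key i (hmem i hi)).2.2.2.2 (sq_nonneg _)
    · exact (key i (hmem i hi)).2.2.2.1
  have hmain : (1:ℝ)/6 * (∏ i ∈ Icc 5 n, r i)^2
      ≤ (∏ i ∈ Icc 5 n, (r i + δ i)) * (∏ i ∈ Icc 5 n, (r i - δ i)) := by
    calc (1:ℝ)/6 * (∏ i ∈ Icc 5 n, r i)^2
        ≤ (∏ i ∈ Icc 5 n, (1 - 4/((i:ℝ)-2)^2)) * (∏ i ∈ Icc 5 n, r i)^2 :=
          mul_le_mul_of_nonneg_right hclower (sq_nonneg _)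
      _ ≤ _ := hprodle
  have hR := hprod₂ n hn
  have h1 : (∏ i ∈ Icc 5 n, (r i - δ i)) ≤ (∏ i ∈ Icc 5 n, r i) / ε := by
    rw [le_div_iff₀ hε]; linarith
  have h2 : (∏ i ∈ Icc 5 n, (r i + δ i)) * (∏ i ∈ Icc 5 n, (r i - δ i))
      ≤ (∏ i ∈ Icc 5 n, (r i + δ i)) * ((∏ i ∈ Icc 5 n, r i) / ε) :=
    mul_le_mul_of_nonneg_left h1 Qpos.le
  have h3 : ε/6 * (∏ i ∈ Icc 5 n, r i) * (∏ i ∈ Icc 5 n, r i)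
      ≤ (∏ i ∈ Icc 5 n, (r i + δ i)) * (∏ i ∈ Icc 5 n, r i) := by
    calc ε/6 * (∏ i ∈ Icc 5 n, r i) * (∏ i ∈ Icc 5 n, r i)
        = ε * ((1:ℝ)/6 * (∏ i ∈ Icc 5 n, r i)^2) := by ring
      _ ≤ ε * ((∏ i ∈ Icc 5 n, (r i + δ i)) * ((∏ i ∈ Icc 5 n, r i) / ε)) :=
          mul_le_mul_of_nonneg_left (hmain.trans h2) hε.le
      _ = (∏ i ∈ Icc 5 n, (r i + δ i)) * (∏ i ∈ Icc 5 n, r i) := by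
          field_simp
  exact le_of_mul_le_mul_right h3 Ppos
end
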